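/- arXiv:1909.03662 — 3 statements merged into one kernel-verified Lean document; each statement's English description precedes it below -/
import Mathlib

section
/- If A is a Hermitian positive semidefinite 2n×2n complex matrix and J is the standard symplectic matrix, then every eigenvalue of JA is purely imaginary, i.e. the spectrum of JA is contained in iℝ. -/
open Matrix
open scoped ComplexOrder

theorem spectrum_JA_purely_imaginary (n : ℕ)
    (J A : Matrix (Fin n ⊕ Fin n) (Fin n ⊕ Fin n) ℂ)
    (hJ : J = Matrix.fromBlocks 0 1 (-1) 0)
    (hA : A.PosSemidef) :
    ∀ μ ∈ spectrum ℂ (J * A), μ.re = 0 := by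
  intro μ hμ
  -- J is skew-Hermitian
  have hJH : Jᴴ = -J := by
    subst hJ
    simp [Matrix.fromBlocks_conjTranspose, Matrix.fromBlocks_neg]
  -- get an eigenvector
  rw [← AlgEquiv.spectrum_eq (Matrix.toLinAlgEquiv (Pi.basisFun ℂ (Fin n ⊕ Fin n))),
    ← Module.End.hasEigenvalue_iff_mem_spectrum] at hμ
  obtain ⟨v, hv, hv0⟩ := hμ.exists_hasEigenvector
  have hveq : (J * A) *ᵥ v = μ • v := by
    have h1 := Module.End.mem_eigenspace_iff.mp hv
    rwa [show Matrix.toLinAlgEquiv (Pi.basisFun ℂ (Fin n ⊕ Fin n)) (J * A)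
        = Matrix.toLin' (J * A) by
      rw [Matrix.toLinAlgEquiv, ← Matrix.toLin_eq_toLin']; rfl,
      Matrix.toLin'_apply] at h1
  set w := A *ᵥ v with hw
  have hJw : J *ᵥ w = μ • v := by rw [hw, Matrix.mulVec_mulVec]; exact hveq
  set c : ℂ := star v ⬝ᵥ w with hc
  have hc0 : 0 ≤ c := hA.dotProduct_mulVec_nonneg v
  have hc_real : (starRingEnd ℂ) c = c := by
    rw [Complex.conj_eq_iff_im]
    simpa using (Complex.le_def.mp hc0).2.symm
  -- the quantity t = w* J w
  have hAw : star w ⬝ᵥ v = c := by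
    rw [hc, hw, Matrix.star_mulVec, ← Matrix.dotProduct_mulVec, hA.1]
  have ht : star w ⬝ᵥ (J *ᵥ w) = μ * c := by
    rw [hJw, dotProduct_smul, smul_eq_mul, hAw]
  have htstar : (starRingEnd ℂ) (star w ⬝ᵥ (J *ᵥ w)) = -(star w ⬝ᵥ (J *ᵥ w)) := by
    conv_lhs => rw [← Complex.star_def, ← Matrix.star_dotProduct_star, star_star,
      Matrix.star_mulVec, hJH, ← Matrix.dotProduct_mulVec, Matrix.neg_mulVec,
      dotProduct_neg]
  rw [ht, _root_.map_mul, hc_real] at htstar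
  -- so (conj μ + μ) * c = 0
  have hkey : (starRingEnd ℂ μ + μ) * c = 0 := by
    rw [add_mul, htstar]; ring
  rcases mul_eq_zero.mp hkey with h | h
  · have := congrArg Complex.re h
    simpa [Complex.add_re] using this
  · -- c = 0, so A v = 0, so μ • v = 0, so μ = 0
    have hAv : A *ᵥ v = 0 := (hA.dotProduct_mulVec_zero_iff v).mp (by rw [← hc]; exact h)
    have : μ • v = 0 := by rw [← hJw, hw, hAv, Matrix.mulVec_zero]
    rcases smul_eq_zero.mp this with h | h
    · simp [h]
    · exact absurd h hv0
end

section
/- Let Q be a complex symmetric 2n×2n matrix with Re Q positive semidefinite and J the standard symplectic matrix. Then for all t ∈ ℝ, e^{-2itJQ} e^{-2itJ\bar{Q}} = I_{2n} - 4iJΓ_t, where Γ_t = ∫_0^t (e^{-2isJ\bar{Q}})* (Re Q) (e^{-2isJ\bar{Q}}) ds. -/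
open Matrix NormedSpace
open scoped ComplexOrder

section AuxExpDeriv

variable {m : Type*} [Fintype m] [DecidableEq m]

lemma aux_hasDerivAt_entry (A B : Matrix m m ℂ) (i j : m) (s : ℝ) :
    HasDerivAt (fun u : ℝ => (exp ((u:ℂ) • A) * exp ((u:ℂ) • B)) i j)
      ((A * exp ((s:ℂ) • A) * exp ((s:ℂ) • B)
        + exp ((s:ℂ) • A) * (exp ((s:ℂ) • B) * B)) i j) s := by
  letI : SeminormedRing (Matrix m m ℂ) := Matrix.linftyOpSemiNormedRing
  letI : NormedRing (Matrix m m ℂ) := Matrix.linftyOpNormedRing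
  letI : NormedAlgebra ℂ (Matrix m m ℂ) := Matrix.linftyOpNormedAlgebra
  have hA : HasDerivAt (fun u : ℝ => exp ((u:ℂ) • A)) (A * exp ((s:ℂ) • A)) s := by
    have h := hasDerivAt_exp_smul_const' (𝔸 := Matrix m m ℂ) A (s : ℂ)
    have h2 := h.scomp s Complex.ofRealCLM.hasDerivAt
    rw [Complex.ofRealCLM_apply, Complex.ofReal_one, one_smul] at h2
    exact h2
  have hB : HasDerivAt (fun u : ℝ => exp ((u:ℂ) • B)) (exp ((s:ℂ) • B) * B) s := by
    have h := hasDerivAt_exp_smul_const (𝔸 := Matrix m m ℂ) B (s : ℂ)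
    have h2 := h.scomp s Complex.ofRealCLM.hasDerivAt
    rw [Complex.ofRealCLM_apply, Complex.ofReal_one, one_smul] at h2
    exact h2
  have hf := hA.mul hB
  let eCLM : Matrix m m ℂ →L[ℝ] ℂ := LinearMap.toContinuousLinearMap
    { toFun := fun M => M i j
      map_add' := fun _ _ => rfl
      map_smul' := fun _ _ => rfl }
  exact (eCLM.hasFDerivAt.comp_hasDerivAt s hf :)

lemma aux_continuous_exp (B : Matrix m m ℂ) :
    Continuous (fun s : ℝ => exp ((s:ℂ) • B)) := by
  letI : SeminormedRing (Matrix m m ℂ) := Matrix.linftyOpSemiNormedRing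
  letI : NormedRing (Matrix m m ℂ) := Matrix.linftyOpNormedRing
  letI : NormedAlgebra ℂ (Matrix m m ℂ) := Matrix.linftyOpNormedAlgebra
  rw [continuous_iff_continuousAt]
  intro s
  have h := hasDerivAt_exp_smul_const (𝔸 := Matrix m m ℂ) B (s : ℂ)
  exact ((h.scomp s Complex.ofRealCLM.hasDerivAt).continuousAt :)

end AuxExpDeriv

theorem exp_product_eq_one_sub_fourI_JGamma (n : ℕ) (t : ℝ)
    (J Q ReQ Γ : Matrix (Fin n ⊕ Fin n) (Fin n ⊕ Fin n) ℂ)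
    (hJ : J = Matrix.fromBlocks 0 1 (-1) 0)
    (hQ : Qᵀ = Q)
    (hReQ : ReQ = (2:ℂ)⁻¹ • (Q + Q.map (starRingEnd ℂ)))
    (hpos : ReQ.PosSemidef)
    (hΓ : ∀ i j, Γ i j = ∫ s in (0:ℝ)..t,
        ((exp ((-2 * Complex.I * (s:ℂ)) • (J * Q.map (starRingEnd ℂ))))ᴴ * ReQ *
          exp ((-2 * Complex.I * (s:ℂ)) • (J * Q.map (starRingEnd ℂ)))) i j) :
    exp ((-2 * Complex.I * (t:ℂ)) • (J * Q)) *
        exp ((-2 * Complex.I * (t:ℂ)) • (J * Q.map (starRingEnd ℂ)))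
      = 1 - (4 * Complex.I) • (J * Γ) := by
  set A : Matrix (Fin n ⊕ Fin n) (Fin n ⊕ Fin n) ℂ := (-2 * Complex.I) • (J * Q) with hA
  set B : Matrix (Fin n ⊕ Fin n) (Fin n ⊕ Fin n) ℂ :=
    (-2 * Complex.I) • (J * Q.map (starRingEnd ℂ)) with hB
  set C : Matrix (Fin n ⊕ Fin n) (Fin n ⊕ Fin n) ℂ := (-2 * Complex.I) • (Q * J) with hC
  have hAs : ∀ s : ℝ, (-2 * Complex.I * (s:ℂ)) • (J * Q) = (s:ℂ) • A := by
    intro s; rw [hA, smul_smul, mul_comm]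
  have hBs : ∀ s : ℝ, (-2 * Complex.I * (s:ℂ)) • (J * Q.map (starRingEnd ℂ)) = (s:ℂ) • B := by
    intro s; rw [hB, smul_smul, mul_comm]
  -- basic facts about J
  have hJJ : J * J = -1 := by
    rw [hJ, Matrix.fromBlocks_multiply]
    simp only [Matrix.mul_zero, Matrix.zero_mul, Matrix.mul_one, Matrix.one_mul, Matrix.neg_mul,
      Matrix.mul_neg, add_zero, zero_add, neg_zero]
    ext i j
    cases i <;> cases j <;>
      simp [Matrix.fromBlocks, Matrix.one_apply, eq_comm]
  have hJH : Jᴴ = -J := by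
    rw [hJ]
    ext i j
    cases i <;> cases j <;>
      simp [Matrix.conjTranspose_apply, Matrix.fromBlocks, Matrix.one_apply, eq_comm,
        apply_ite (starRingEnd ℂ)]
  have hQbarH : (Q.map (starRingEnd ℂ))ᴴ = Q := by
    ext i j
    simp only [Matrix.conjTranspose_apply, Matrix.map_apply, Complex.star_def, Complex.conj_conj]
    exact congrFun (congrFun hQ i) j
  have hmJJ : J * -J = 1 := by rw [Matrix.mul_neg, hJJ, neg_neg]
  have hmJJ' : (-J) * J = 1 := by rw [Matrix.neg_mul, hJJ, neg_neg]
  have hJinv : J⁻¹ = -J := Matrix.inv_eq_right_inv hmJJ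
  have hUnit : IsUnit J := ⟨⟨J, -J, hmJJ, hmJJ'⟩, rfl⟩
  have hconj : ∀ s : ℝ, J * exp ((s:ℂ) • C) = exp ((s:ℂ) • A) * J := by
    intro s
    have h2 : (-J) * (J * Q) * J = Q * J := by
      rw [Matrix.neg_mul, ← Matrix.mul_assoc J J Q, hJJ]
      simp
    have h1 : (s:ℂ) • C = J⁻¹ * ((s:ℂ) • A) * J := by
      rw [hJinv, hC, hA]
      rw [Matrix.mul_smul, Matrix.smul_mul, Matrix.mul_smul, Matrix.smul_mul, h2]
    rw [h1, Matrix.exp_conj' J _ hUnit, hJinv, ← Matrix.mul_assoc, ← Matrix.mul_assoc,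
      hmJJ, Matrix.one_mul]
  have hBH : ∀ s : ℝ, (exp ((s:ℂ) • B))ᴴ = exp ((s:ℂ) • C) := by
    intro s
    rw [← Matrix.exp_conjTranspose]
    congr 1
    rw [hB, hC, Matrix.conjTranspose_smul, Matrix.conjTranspose_smul,
      Matrix.conjTranspose_mul, hQbarH, hJH]
    simp only [Matrix.mul_neg, smul_neg, ← neg_smul]
    rw [smul_smul, smul_smul]
    congr 1
    simp [Complex.conj_I, Complex.conj_ofReal]
  have hJReQ : (-(4 * Complex.I)) • (J * ReQ) = A + B := by
    rw [hReQ, hA, hB, Matrix.mul_smul, Matrix.mul_add, smul_smul, smul_add]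
    congr 1 <;> · congr 1; ring
  -- key identity
  have hkey : ∀ s : ℝ,
      A * exp ((s:ℂ) • A) * exp ((s:ℂ) • B)
        + exp ((s:ℂ) • A) * (exp ((s:ℂ) • B) * B)
      = (-(4 * Complex.I)) • (J * ((exp ((s:ℂ) • B))ᴴ * ReQ * exp ((s:ℂ) • B))) := by
    intro s
    have hcA : A * exp ((s:ℂ) • A) = exp ((s:ℂ) • A) * A :=
      (((Commute.refl A).smul_right ((s:ℂ))).exp_right).eq
    have hcB : B * exp ((s:ℂ) • B) = exp ((s:ℂ) • B) * B :=
      (((Commute.refl B).smul_right ((s:ℂ))).exp_right).eq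
    rw [hBH s]
    symm
    calc (-(4 * Complex.I)) • (J * (exp ((s:ℂ) • C) * ReQ * exp ((s:ℂ) • B)))
        = exp ((s:ℂ) • A) * ((-(4 * Complex.I)) • (J * ReQ)) * exp ((s:ℂ) • B) := by
          rw [← Matrix.mul_assoc J, ← Matrix.mul_assoc J, hconj s]
          simp only [Matrix.mul_smul, Matrix.smul_mul, Matrix.mul_assoc]
      _ = exp ((s:ℂ) • A) * (A + B) * exp ((s:ℂ) • B) := by rw [hJReQ]
      _ = A * exp ((s:ℂ) • A) * exp ((s:ℂ) • B)
            + exp ((s:ℂ) • A) * (exp ((s:ℂ) • B) * B) := by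
          rw [Matrix.mul_add, Matrix.add_mul, ← hcA, Matrix.mul_assoc _ B, hcB]
  -- integrand
  set g : ℝ → Matrix (Fin n ⊕ Fin n) (Fin n ⊕ Fin n) ℂ :=
    fun s => (exp ((s:ℂ) • B))ᴴ * ReQ * exp ((s:ℂ) • B) with hg
  have hΓ' : ∀ k l, Γ k l = ∫ s in (0:ℝ)..t, g s k l := by
    intro k l
    rw [hΓ k l]
    simp only [hBs, hg]
  have hexpcont := aux_continuous_exp B
  have hgcont : Continuous fun s : ℝ => g s :=
    (hexpcont.matrix_conjTranspose.matrix_mul continuous_const).matrix_mul hexpcont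
  have hJgcont : ∀ i j, Continuous fun s : ℝ => (J * g s) i j := fun i j =>
    (continuous_const.matrix_mul hgcont).matrix_elem i j
  rw [hAs t, hBs t]
  ext i j
  have hftc : ∫ s in (0:ℝ)..t, (-(4 * Complex.I)) * ((J * g s) i j)
      = (exp ((t:ℂ) • A) * exp ((t:ℂ) • B)) i j
        - (1 : Matrix (Fin n ⊕ Fin n) (Fin n ⊕ Fin n) ℂ) i j := by
    have hd : ∀ s ∈ Set.uIcc (0:ℝ) t,
        HasDerivAt (fun u : ℝ => (exp ((u:ℂ) • A) * exp ((u:ℂ) • B)) i j)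
          ((-(4 * Complex.I)) * ((J * g s) i j)) s := by
      intro s _
      have h := aux_hasDerivAt_entry A B i j s
      rw [hkey s] at h
      simpa only [Matrix.smul_apply, smul_eq_mul, hg] using h
    have hint : IntervalIntegrable (fun s : ℝ => (-(4 * Complex.I)) * ((J * g s) i j))
        MeasureTheory.volume 0 t :=
      (continuous_const.mul (hJgcont i j)).intervalIntegrable _ _
    have h := intervalIntegral.integral_eq_sub_of_hasDerivAt hd hint
    simpa using h
  have hJΓ : (J * Γ) i j = ∫ s in (0:ℝ)..t, (J * g s) i j := by
    rw [Matrix.mul_apply]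
    have h1 : ∀ k, J i k * Γ k j = ∫ s in (0:ℝ)..t, J i k * g s k j := by
      intro k
      rw [hΓ' k j, ← intervalIntegral.integral_const_mul]
    rw [Finset.sum_congr rfl fun k _ => h1 k, ← intervalIntegral.integral_finset_sum]
    · congr 1
    · intro k _
      exact (continuous_const.mul (hgcont.matrix_elem k j)).intervalIntegrable _ _
  rw [intervalIntegral.integral_const_mul] at hftc
  rw [Matrix.sub_apply, Matrix.smul_apply, hJΓ, smul_eq_mul]
  linear_combination -hftc
end

section
/- Let H be a real symplectic 2n×2n matrix with ‖H - I‖ < 1 and ‖H^{-1} - I‖ < 1 (operator norm). Then the matrix B defined by 2JB = log H (principal matrix logarithm via the convergent power series log H = Σ_{k≥1} (-1)^{k-1}(H-I)^k / k) is real and symmetric, i.e. B^T = B and B has real entries. -/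
open Matrix
open scoped Matrix.Norms.L2Operator

section Aux

variable {A : Type*} [NormedRing A] [NormedAlgebra ℝ A] [CompleteSpace A]

private lemma summable_log_terms (a : A) (ha : ‖a‖ < 1) :
    Summable fun k : ℕ => ((-1 : ℝ) ^ k / (k + 1)) • a ^ (k + 1) := by
  apply Summable.of_norm
  refine Summable.of_nonneg_of_le (fun k => norm_nonneg _) (fun k => ?_)
    ((summable_geometric_of_lt_one (norm_nonneg a) ha).mul_left ‖a‖)
  rw [norm_smul]
  calc ‖(-1 : ℝ) ^ k / ((k : ℝ) + 1)‖ * ‖a ^ (k + 1)‖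
      ≤ 1 * ‖a‖ ^ (k + 1) := by
        apply mul_le_mul _ (norm_pow_le' a k.succ_pos) (norm_nonneg _) zero_le_one
        rw [Real.norm_eq_abs, abs_div, abs_pow, abs_neg, abs_one, one_pow]
        rw [div_le_one (by positivity)]
        simp [abs_of_nonneg (by positivity : (0:ℝ) ≤ (k:ℝ) + 1)]
    _ = ‖a‖ * ‖a‖ ^ k := by rw [one_mul, pow_succ, mul_comm]

private noncomputable def gg (a b e : A) (k : ℕ) (t : ℝ) : A :=
  ((-1 : ℝ) ^ k / (k + 1) * t ^ (k + 1)) • a ^ (k + 1)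
    + (((-1 : ℝ) ^ k / (k + 1) * t ^ (k + 1)) • b ^ (k + 1)
      - ((-1 : ℝ) ^ k / (k + 1) * (t - t ^ 2) ^ (k + 1)) • e ^ (k + 1))

private noncomputable def gg' (a b e : A) (k : ℕ) (t : ℝ) : A :=
  ((-1 : ℝ) ^ k * t ^ k) • a ^ (k + 1)
    + (((-1 : ℝ) ^ k * t ^ k) • b ^ (k + 1)
      - ((-1 : ℝ) ^ k * ((t - t ^ 2) ^ k * (1 - 2 * t))) • e ^ (k + 1))

private lemma gg_hasDerivAt (a b e : A) (k : ℕ) (t : ℝ) :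
    HasDerivAt (gg a b e k) (gg' a b e k t) t := by
  have hk0 : ((k : ℝ) + 1) ≠ 0 := by positivity
  have h1 : HasDerivAt (fun t : ℝ => ((-1 : ℝ) ^ k / (k + 1) * t ^ (k + 1)) • a ^ (k + 1))
      (((-1 : ℝ) ^ k * t ^ k) • a ^ (k + 1)) t := by
    have h := ((hasDerivAt_pow (k + 1) t).const_mul ((-1 : ℝ) ^ k / ((k : ℝ) + 1))).smul_const
      (a ^ (k + 1))
    simp only [Nat.add_sub_cancel, Nat.cast_add, Nat.cast_one] at h
    convert h using 2
    · rfl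
    field_simp
  have h2 : HasDerivAt (fun t : ℝ => ((-1 : ℝ) ^ k / (k + 1) * t ^ (k + 1)) • b ^ (k + 1))
      (((-1 : ℝ) ^ k * t ^ k) • b ^ (k + 1)) t := by
    have h := ((hasDerivAt_pow (k + 1) t).const_mul ((-1 : ℝ) ^ k / ((k : ℝ) + 1))).smul_const
      (b ^ (k + 1))
    simp only [Nat.add_sub_cancel, Nat.cast_add, Nat.cast_one] at h
    convert h using 2
    · rfl
    field_simp
  have h3 : HasDerivAt (fun t : ℝ => ((-1 : ℝ) ^ k / (k + 1) * (t - t ^ 2) ^ (k + 1)) • e ^ (k + 1))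
      (((-1 : ℝ) ^ k * ((t - t ^ 2) ^ k * (1 - 2 * t))) • e ^ (k + 1)) t := by
    have hpoly : HasDerivAt (fun t : ℝ => t - t ^ 2) (1 - 2 * t) t := by
      exact ((hasDerivAt_id' t).sub (hasDerivAt_pow 2 t)).congr_deriv (by norm_num)
    have h := ((hpoly.pow (k + 1)).const_mul ((-1 : ℝ) ^ k / ((k : ℝ) + 1))).smul_const
      (e ^ (k + 1))
    simp only [Nat.add_sub_cancel, Nat.cast_add, Nat.cast_one, Pi.pow_apply] at h
    convert h using 2
    · rfl
    field_simp
  exact h1.add (h2.sub h3)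

private lemma gg_zero (a b e : A) (k : ℕ) : gg a b e k 0 = 0 := by
  simp [gg, zero_pow (Nat.succ_ne_zero k)]

private lemma gg_one (a b e : A) (k : ℕ) :
    gg a b e k 1 = ((-1 : ℝ) ^ k / (k + 1)) • a ^ (k + 1)
      + ((-1 : ℝ) ^ k / (k + 1)) • b ^ (k + 1) := by
  simp [gg, zero_pow (Nat.succ_ne_zero k)]

private lemma gg'_bound {a b e : A} {ρ ε : ℝ} (hρa : ‖a‖ ≤ ρ) (hρb : ‖b‖ ≤ ρ)
    (hρ1 : ρ < 1) (hρ0 : 0 < ρ) (hε0 : 0 < ε) (hε4 : ε ≤ 1/4) (he2 : ‖e‖ ≤ 1)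
    {k : ℕ} {t : ℝ} (ht1 : |t| ≤ 1 + ε) (ht2 : |t - t ^ 2| ≤ 5/16) :
    ‖gg' a b e k t‖ ≤ ((1 + ε) * ρ) ^ k + ((1 + ε) * ρ) ^ k + 4 * (5/16) ^ k := by
  have key : ∀ c : A, ‖c‖ ≤ ρ →
      ‖((-1 : ℝ) ^ k * t ^ k) • c ^ (k + 1)‖ ≤ ((1 + ε) * ρ) ^ k := by
    intro c hc
    rw [norm_smul, Real.norm_eq_abs, abs_mul, abs_pow, abs_pow, abs_neg, abs_one, one_pow,
      one_mul]
    calc |t| ^ k * ‖c ^ (k + 1)‖ ≤ (1 + ε) ^ k * (ρ ^ k * ρ) := by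
          apply mul_le_mul (pow_le_pow_left₀ (abs_nonneg t) ht1 k)
            _ (norm_nonneg _) (by positivity)
          calc ‖c ^ (k + 1)‖ ≤ ‖c‖ ^ (k + 1) := norm_pow_le' c k.succ_pos
            _ ≤ ρ ^ (k + 1) := pow_le_pow_left₀ (norm_nonneg c) hc _
            _ = ρ ^ k * ρ := pow_succ ρ k
      _ = ((1 + ε) * ρ) ^ k * ρ := by rw [mul_pow]; ring
      _ ≤ ((1 + ε) * ρ) ^ k * 1 := by
          apply mul_le_mul_of_nonneg_left (le_of_lt hρ1) (by positivity)
      _ = ((1 + ε) * ρ) ^ k := mul_one _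
  have hte : ‖((-1 : ℝ) ^ k * ((t - t ^ 2) ^ k * (1 - 2 * t))) • e ^ (k + 1)‖
      ≤ 4 * (5/16) ^ k := by
    rw [norm_smul, Real.norm_eq_abs, abs_mul, abs_mul, abs_pow, abs_pow, abs_neg, abs_one,
      one_pow, one_mul]
    have h12t : |1 - 2 * t| ≤ 4 := by
      rw [abs_le] at ht1 ⊢
      constructor <;> nlinarith
    have hek : ‖e ^ (k + 1)‖ ≤ 1 := by
      calc ‖e ^ (k + 1)‖ ≤ ‖e‖ ^ (k + 1) := norm_pow_le' e k.succ_pos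
        _ ≤ 1 ^ (k + 1) := pow_le_pow_left₀ (norm_nonneg e) he2 _
        _ = 1 := one_pow _
    calc |t - t ^ 2| ^ k * |1 - 2 * t| * ‖e ^ (k + 1)‖
        ≤ (5/16) ^ k * 4 * 1 := by
          apply mul_le_mul _ hek (norm_nonneg _) (by positivity)
          exact mul_le_mul (pow_le_pow_left₀ (abs_nonneg _) ht2 k) h12t
            (abs_nonneg _) (by positivity)
      _ = 4 * (5/16) ^ k := by ring
  calc ‖gg' a b e k t‖ ≤ ‖((-1 : ℝ) ^ k * t ^ k) • a ^ (k + 1)‖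
        + (‖((-1 : ℝ) ^ k * t ^ k) • b ^ (k + 1)‖
          + ‖((-1 : ℝ) ^ k * ((t - t ^ 2) ^ k * (1 - 2 * t))) • e ^ (k + 1)‖) :=
      le_trans (norm_add_le _ _) (by gcongr; exact norm_sub_le _ _)
    _ ≤ ((1 + ε) * ρ) ^ k + (((1 + ε) * ρ) ^ k + 4 * (5/16) ^ k) := by
        exact add_le_add (key a hρa) (add_le_add (key b hρb) hte)
    _ = ((1 + ε) * ρ) ^ k + ((1 + ε) * ρ) ^ k + 4 * (5/16) ^ k := by ring

/-- The sum of derivatives is zero. -/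
private lemma gg'_tsum_zero {a b e : A} (he : e = a + b) (habe : a * b = -e)
    (hbae : b * a = -e) {t : ℝ} (hxn : ‖(-t) • a‖ < 1) (hyn : ‖(-t) • b‖ < 1)
    (hzn : ‖(-(t - t ^ 2)) • e‖ < 1) :
    (∑' k, gg' a b e k t) = 0 := by
  set x : A := (-t) • a with hx
  set y : A := (-t) • b with hy
  set z : A := (-(t - t ^ 2)) • e with hz
  have hsx : Summable fun k : ℕ => x ^ k := summable_geometric_of_norm_lt_one hxn
  have hsy : Summable fun k : ℕ => y ^ k := summable_geometric_of_norm_lt_one hyn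
  have hsz : Summable fun k : ℕ => z ^ k := summable_geometric_of_norm_lt_one hzn
  have hterm : ∀ k : ℕ, gg' a b e k t
      = x ^ k * a + (y ^ k * b - (1 - 2 * t) • (z ^ k * e)) := by
    intro k
    have e1 : x ^ k * a = ((-1 : ℝ) ^ k * t ^ k) • a ^ (k + 1) := by
      rw [hx, smul_pow, smul_mul_assoc, ← pow_succ, neg_pow]
    have e2 : y ^ k * b = ((-1 : ℝ) ^ k * t ^ k) • b ^ (k + 1) := by
      rw [hy, smul_pow, smul_mul_assoc, ← pow_succ, neg_pow]
    have e3 : (1 - 2 * t) • (z ^ k * e)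
        = ((-1 : ℝ) ^ k * ((t - t ^ 2) ^ k * (1 - 2 * t))) • e ^ (k + 1) := by
      rw [hz, smul_pow, smul_mul_assoc, ← pow_succ, smul_smul, neg_pow]
      congr 1
      ring
    rw [gg', e1, e2, e3]
  rw [tsum_congr hterm]
  have hsum1 : Summable fun k : ℕ => x ^ k * a := hsx.mul_right a
  have hsum2 : Summable fun k : ℕ => y ^ k * b := hsy.mul_right b
  have hsum3 : Summable fun k : ℕ => (1 - 2 * t) • (z ^ k * e) :=
    (hsz.mul_right e).const_smul _
  rw [hsum1.tsum_add (hsum2.sub hsum3), hsum2.tsum_sub hsum3,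
    hsx.tsum_mul_right a, hsy.tsum_mul_right b, (hsz.mul_right e).tsum_const_smul _,
    (hsz.tsum_mul_right e)]
  have hxy : (1 - x) * (1 - y) = 1 - z := by
    have hxyprod : x * y = (t ^ 2) • (a * b) := by
      rw [hx, hy, smul_mul_smul_comm]
      ring_nf
    have expand : (1 - x) * (1 - y) = 1 - x - y + x * y := by noncomm_ring
    rw [expand, hxyprod, habe, hx, hy, hz, he]
    module
  have hyx : (1 - y) * (1 - x) = 1 - z := by
    have hxyprod : y * x = (t ^ 2) • (b * a) := by
      rw [hx, hy, smul_mul_smul_comm]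
      ring_nf
    have expand : (1 - y) * (1 - x) = 1 - y - x + y * x := by noncomm_ring
    rw [expand, hxyprod, hbae, hx, hy, hz, he]
    module
  set S : A := (∑' k, x ^ k) * a + ((∑' k, y ^ k) * b - (1 - 2 * t) • ((∑' k, z ^ k) * e))
    with hS
  have hRS : (1 - z) * S = 0 := by
    have c1 : (1 - z) * ((∑' k, x ^ k) * a) = (1 - y) * a := by
      rw [← hyx, mul_assoc, ← mul_assoc (1 - x), mul_neg_geom_series x hxn, one_mul]
    have c2 : (1 - z) * ((∑' k, y ^ k) * b) = (1 - x) * b := by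
      rw [← hxy, mul_assoc, ← mul_assoc (1 - y), mul_neg_geom_series y hyn, one_mul]
    have c3 : (1 - z) * ((1 - 2 * t) • ((∑' k, z ^ k) * e)) = (1 - 2 * t) • e := by
      rw [mul_smul_comm, ← mul_assoc, mul_neg_geom_series z hzn, one_mul]
    rw [hS, mul_add, mul_sub, c1, c2, c3]
    have d1 : (1 - y) * a = a - t • e := by
      rw [sub_mul, one_mul, hy, smul_mul_assoc, hbae]
      module
    have d2 : (1 - x) * b = b - t • e := by
      rw [sub_mul, one_mul, hx, smul_mul_assoc, habe]
      module
    rw [d1, d2, he]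
    module
  have hunit : IsUnit (1 - z) := isUnit_one_sub_of_norm_lt_one hzn
  obtain ⟨u, hu'⟩ := hunit
  have hfin : S = ↑u⁻¹ * ((1 - z) * S) := by rw [← hu', ← mul_assoc, Units.inv_mul, one_mul]
  rw [hRS, mul_zero] at hfin
  exact hfin

private lemma log_add_log_inv (a b : A) (hcomm : a * b = b * a) (hab : (1 + a) * (1 + b) = 1)
    (ha : ‖a‖ < 1) (hb : ‖b‖ < 1) :
    (∑' k : ℕ, ((-1 : ℝ) ^ k / (k + 1)) • a ^ (k + 1))
      + (∑' k : ℕ, ((-1 : ℝ) ^ k / (k + 1)) • b ^ (k + 1)) = 0 := by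
  have habe : a * b = -(a + b) := by
    have h0 : (1 + a) * (1 + b) = 1 + ((a + b) + a * b) := by noncomm_ring
    rw [h0] at hab
    have h1 : (a + b) + a * b = 0 := by
      have := hab
      nth_rewrite 2 [show (1 : A) = 1 + 0 by rw [add_zero]] at this
      exact add_left_cancel this
    exact eq_neg_of_add_eq_zero_right h1
  have hbae : b * a = -(a + b) := by rw [← hcomm]; exact habe
  set e : A := a + b with he
  set ρ : ℝ := max (max ‖a‖ ‖b‖) (1/2) with hρdef
  have hρa : ‖a‖ ≤ ρ := le_max_of_le_left (le_max_left _ _)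
  have hρb : ‖b‖ ≤ ρ := le_max_of_le_left (le_max_right _ _)
  have hρhalf : 1/2 ≤ ρ := le_max_right _ _
  have hρ1 : ρ < 1 := max_lt (max_lt ha hb) (by norm_num)
  have hρ0 : 0 < ρ := lt_of_lt_of_le (by norm_num) hρhalf
  set ε : ℝ := (1 - ρ)/2 with hεdef
  have hε0 : 0 < ε := by rw [hεdef]; linarith
  have hε4 : ε ≤ 1/4 := by rw [hεdef]; linarith
  have hq0 : 0 ≤ (1 + ε) * ρ := by positivity
  have hq1 : (1 + ε) * ρ < 1 := by rw [hεdef]; nlinarith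
  have he1 : ‖e‖ ≤ ρ * ρ := by
    calc ‖e‖ = ‖a * b‖ := by rw [show a * b = -e from habe, norm_neg]
      _ ≤ ‖a‖ * ‖b‖ := norm_mul_le a b
      _ ≤ ρ * ρ := mul_le_mul hρa hρb (norm_nonneg _) (le_of_lt hρ0)
  have he2 : ‖e‖ ≤ 1 := le_trans he1 (by nlinarith)
  have habs : ∀ t ∈ Set.Ioo (-ε) (1 + ε), |t| ≤ 1 + ε := by
    intro t ht
    rw [abs_le]
    exact ⟨by linarith [ht.1, hε0], le_of_lt ht.2⟩
  have htt : ∀ t ∈ Set.Ioo (-ε) (1 + ε), |t - t ^ 2| ≤ 5/16 := by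
    intro t ht
    have h1 : -(1/4 : ℝ) ≤ t := by linarith [ht.1, hε4]
    have h2 : t ≤ 5/4 := by linarith [ht.2, hε4]
    rw [abs_le]
    constructor
    · nlinarith [mul_nonneg (by linarith : (0:ℝ) ≤ t + 1/4) (by linarith : (0:ℝ) ≤ 5/4 - t)]
    · nlinarith [sq_nonneg (t - 1/2)]
  have hu : Summable fun k : ℕ => ((1 + ε) * ρ) ^ k + ((1 + ε) * ρ) ^ k + 4 * (5/16 : ℝ) ^ k := by
    have h1 : Summable fun k : ℕ => ((1 + ε) * ρ) ^ k := summable_geometric_of_lt_one hq0 hq1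
    have h2 : Summable fun k : ℕ => (5/16 : ℝ) ^ k :=
      summable_geometric_of_lt_one (by norm_num) (by norm_num)
    exact (h1.add h1).add (h2.mul_left 4)
  have hg0 : Summable fun k => gg a b e k 0 := by
    simp only [gg_zero]
    exact summable_zero
  have h0s : (0 : ℝ) ∈ Set.Ioo (-ε) (1 + ε) := Set.mem_Ioo.mpr ⟨by linarith, by linarith⟩
  have hF : ∀ t ∈ Set.Ioo (-ε) (1 + ε),
      HasDerivAt (fun t => ∑' k, gg a b e k t) (∑' k, gg' a b e k t) t := by
    intro t ht
    exact hasDerivAt_tsum_of_isPreconnected hu isOpen_Ioo isPreconnected_Ioo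
      (fun k y _ => gg_hasDerivAt a b e k y)
      (fun k y hy => gg'_bound hρa hρb hρ1 hρ0 hε0 hε4 he2 (habs y hy) (htt y hy))
      h0s hg0 ht
  have hzero : ∀ t ∈ Set.Ioo (-ε) (1 + ε), (∑' k, gg' a b e k t) = 0 := by
    intro t ht
    apply gg'_tsum_zero he habe hbae
    · rw [norm_smul, Real.norm_eq_abs, abs_neg]
      calc |t| * ‖a‖ ≤ (1 + ε) * ρ :=
            mul_le_mul (habs t ht) hρa (norm_nonneg a) (by positivity)
        _ < 1 := hq1
    · rw [norm_smul, Real.norm_eq_abs, abs_neg]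
      calc |t| * ‖b‖ ≤ (1 + ε) * ρ :=
            mul_le_mul (habs t ht) hρb (norm_nonneg b) (by positivity)
        _ < 1 := hq1
    · rw [norm_smul, Real.norm_eq_abs, abs_neg]
      calc |t - t ^ 2| * ‖e‖ ≤ (5/16) * 1 :=
            mul_le_mul (htt t ht) he2 (norm_nonneg e) (by norm_num)
        _ < 1 := by norm_num
  have hsub : Set.Icc (0 : ℝ) 1 ⊆ Set.Ioo (-ε) (1 + ε) := by
    intro t ht
    exact ⟨by linarith [ht.1], by linarith [ht.2]⟩
  have hconst := constant_of_has_deriv_right_zero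
    (f := fun t => ∑' k, gg a b e k t) (a := 0) (b := 1)
    (fun t ht => ((hzero t (hsub ht) ▸ hF t (hsub ht)).continuousAt).continuousWithinAt)
    (fun t ht => (hzero t (hsub (Set.mem_Icc.mpr ⟨ht.1, le_of_lt ht.2⟩)) ▸
      hF t (hsub (Set.mem_Icc.mpr ⟨ht.1, le_of_lt ht.2⟩))).hasDerivWithinAt)
    1 (Set.mem_Icc.mpr ⟨zero_le_one, le_refl 1⟩)
  have hconst' : (∑' k, gg a b e k 1) = ∑' k, gg a b e k 0 := hconst
  have hF0 : (∑' k, gg a b e k 0) = 0 := by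
    simp only [gg_zero]
    exact tsum_zero
  have hF1 : (∑' k, gg a b e k 1)
      = (∑' k : ℕ, ((-1 : ℝ) ^ k / (k + 1)) • a ^ (k + 1))
        + (∑' k : ℕ, ((-1 : ℝ) ^ k / (k + 1)) • b ^ (k + 1)) := by
    rw [tsum_congr (gg_one a b e)]
    exact (summable_log_terms a ha).tsum_add (summable_log_terms b hb)
  rw [← hF1, hconst', hF0]

end Aux

theorem log_symplectic_symmetric (n : ℕ)
    (J H B : Matrix (Fin n ⊕ Fin n) (Fin n ⊕ Fin n) ℝ)
    (hJ : J = Matrix.fromBlocks 0 1 (-1) 0)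
    (hsymp : Hᵀ * J * H = J)
    (hnorm : ‖H - 1‖ < 1)
    (hnorm' : ‖H⁻¹ - 1‖ < 1)
    (hB : (2 : ℝ) • (J * B) = ∑' k : ℕ, ((-1 : ℝ) ^ k / (k + 1)) • (H - 1) ^ (k + 1)) :
    Bᵀ = B := by
  have hJJ : J * J = -1 := by
    rw [hJ, Matrix.fromBlocks_multiply, ← Matrix.fromBlocks_one, Matrix.fromBlocks_neg]
    congr 1 <;> simp
  have hJT : Jᵀ = -J := by
    rw [hJ, Matrix.fromBlocks_transpose, Matrix.fromBlocks_neg]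
    congr 1 <;> simp
  have hGH : ((-J) * (Hᵀ * J)) * H = 1 := by
    calc ((-J) * (Hᵀ * J)) * H = (-J) * (Hᵀ * J * H) := by
          rw [mul_assoc]
      _ = (-J) * J := by rw [hsymp]
      _ = 1 := by rw [neg_mul, hJJ, neg_neg]
  have hHinv : H⁻¹ = (-J) * (Hᵀ * J) := Matrix.inv_eq_left_inv hGH
  have hHH : H * H⁻¹ = 1 := by rw [hHinv]; exact mul_eq_one_comm.mp hGH
  have hHH' : H⁻¹ * H = 1 := by rw [hHinv]; exact hGH
  have h1a : (1 : Matrix (Fin n ⊕ Fin n) (Fin n ⊕ Fin n) ℝ) + (H - 1) = H := by abel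
  have h1b : (1 : Matrix (Fin n ⊕ Fin n) (Fin n ⊕ Fin n) ℝ) + (H⁻¹ - 1) = H⁻¹ := by abel
  have hone : (1 + (H - 1)) * (1 + (H⁻¹ - 1)) = 1 := by rw [h1a, h1b]; exact hHH
  have hcomm : (H - 1) * (H⁻¹ - 1) = (H⁻¹ - 1) * (H - 1) := by
    calc (H - 1) * (H⁻¹ - 1) = H * H⁻¹ - H - H⁻¹ + 1 := by noncomm_ring
      _ = H⁻¹ * H - H - H⁻¹ + 1 := by rw [hHH, hHH']
      _ = (H⁻¹ - 1) * (H - 1) := by noncomm_ring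
  have hL := log_add_log_inv (H - 1) (H⁻¹ - 1) hcomm hone hnorm hnorm'
  have hM : (∑' k : ℕ, ((-1 : ℝ) ^ k / (k + 1)) • (H⁻¹ - 1) ^ (k + 1))
      = -(∑' k : ℕ, ((-1 : ℝ) ^ k / (k + 1)) • (H - 1) ^ (k + 1)) :=
    eq_neg_of_add_eq_zero_right hL
  have hsummA : Summable fun k : ℕ => ((-1 : ℝ) ^ k / (k + 1)) • (H - 1) ^ (k + 1) :=
    summable_log_terms _ hnorm
  have hsummB : Summable fun k : ℕ => ((-1 : ℝ) ^ k / (k + 1)) • (H⁻¹ - 1) ^ (k + 1) :=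
    summable_log_terms _ hnorm'
  have hbase : (H - 1)ᵀ * J = J * (H⁻¹ - 1) := by
    have hHTJ : Hᵀ * J = J * H⁻¹ := by
      rw [hHinv, ← mul_assoc]
      have hJnJ : J * -J = 1 := by rw [mul_neg, hJJ, neg_neg]
      rw [hJnJ, one_mul]
    rw [Matrix.transpose_sub, Matrix.transpose_one, Matrix.sub_mul, hHTJ, Matrix.mul_sub,
      mul_one, one_mul]
  have hpow : ∀ m : ℕ, ((H - 1)ᵀ) ^ m * J = J * (H⁻¹ - 1) ^ m := by
    intro m
    induction m with
    | zero => simp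
    | succ m ih =>
      calc ((H - 1)ᵀ) ^ (m + 1) * J = (H - 1)ᵀ * (((H - 1)ᵀ) ^ m * J) := by
            rw [pow_succ', mul_assoc]
        _ = (H - 1)ᵀ * (J * (H⁻¹ - 1) ^ m) := by rw [ih]
        _ = ((H - 1)ᵀ * J) * (H⁻¹ - 1) ^ m := by rw [mul_assoc]
        _ = (J * (H⁻¹ - 1)) * (H⁻¹ - 1) ^ m := by rw [hbase]
        _ = J * (H⁻¹ - 1) ^ (m + 1) := by rw [mul_assoc, ← pow_succ']
  let φ : Matrix (Fin n ⊕ Fin n) (Fin n ⊕ Fin n) ℝ →L[ℝ]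
      Matrix (Fin n ⊕ Fin n) (Fin n ⊕ Fin n) ℝ := LinearMap.toContinuousLinearMap
    { toFun := fun X => Xᵀ * J,
      map_add' := fun X Y => by simp [Matrix.transpose_add, Matrix.add_mul],
      map_smul' := fun c X => by simp [Matrix.transpose_smul, Matrix.smul_mul] }
  let ψ : Matrix (Fin n ⊕ Fin n) (Fin n ⊕ Fin n) ℝ →L[ℝ]
      Matrix (Fin n ⊕ Fin n) (Fin n ⊕ Fin n) ℝ := LinearMap.toContinuousLinearMap
    { toFun := fun X => J * X,
      map_add' := fun X Y => by simp [Matrix.mul_add],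
      map_smul' := fun c X => by simp [Matrix.mul_smul] }
  have hLT : (∑' k : ℕ, ((-1 : ℝ) ^ k / (k + 1)) • (H - 1) ^ (k + 1))ᵀ * J
      = J * (∑' k : ℕ, ((-1 : ℝ) ^ k / (k + 1)) • (H⁻¹ - 1) ^ (k + 1)) := by
    calc (∑' k : ℕ, ((-1 : ℝ) ^ k / (k + 1)) • (H - 1) ^ (k + 1))ᵀ * J
        = φ (∑' k : ℕ, ((-1 : ℝ) ^ k / (k + 1)) • (H - 1) ^ (k + 1)) := rfl
      _ = ∑' k : ℕ, φ (((-1 : ℝ) ^ k / (k + 1)) • (H - 1) ^ (k + 1)) := φ.map_tsum hsummA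
      _ = ∑' k : ℕ, ψ (((-1 : ℝ) ^ k / (k + 1)) • (H⁻¹ - 1) ^ (k + 1)) := by
          refine tsum_congr fun k => ?_
          show (((-1 : ℝ) ^ k / (k + 1)) • (H - 1) ^ (k + 1))ᵀ * J
            = J * (((-1 : ℝ) ^ k / (k + 1)) • (H⁻¹ - 1) ^ (k + 1))
          rw [Matrix.transpose_smul, Matrix.smul_mul, Matrix.transpose_pow, hpow,
            Matrix.mul_smul]
      _ = ψ (∑' k : ℕ, ((-1 : ℝ) ^ k / (k + 1)) • (H⁻¹ - 1) ^ (k + 1)) :=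
          (ψ.map_tsum hsummB).symm
      _ = J * (∑' k : ℕ, ((-1 : ℝ) ^ k / (k + 1)) • (H⁻¹ - 1) ^ (k + 1)) := rfl
  set L : Matrix (Fin n ⊕ Fin n) (Fin n ⊕ Fin n) ℝ :=
    ∑' k : ℕ, ((-1 : ℝ) ^ k / (k + 1)) • (H - 1) ^ (k + 1) with hLdef
  rw [hM] at hLT
  have hJB : J * B = (2⁻¹ : ℝ) • L := by
    have h := congrArg (fun X : Matrix (Fin n ⊕ Fin n) (Fin n ⊕ Fin n) ℝ => (2⁻¹ : ℝ) • X) hB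
    simpa [smul_smul] using h
  have hBeq : B = -((2⁻¹ : ℝ) • (J * L)) := by
    calc B = 1 * B := (one_mul B).symm
      _ = (-(J * J)) * B := by rw [hJJ, neg_neg]
      _ = -(J * (J * B)) := by rw [neg_mul, mul_assoc]
      _ = -(J * ((2⁻¹ : ℝ) • L)) := by rw [hJB]
      _ = -((2⁻¹ : ℝ) • (J * L)) := by rw [Matrix.mul_smul]
  calc Bᵀ = (-((2⁻¹ : ℝ) • (J * L)))ᵀ := by rw [← hBeq]
    _ = -((2⁻¹ : ℝ) • (Lᵀ * Jᵀ)) := by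
        rw [Matrix.transpose_neg, Matrix.transpose_smul, Matrix.transpose_mul]
    _ = -((2⁻¹ : ℝ) • (J * L)) := by
        rw [hJT, Matrix.mul_neg, hLT, Matrix.mul_neg, neg_neg]
    _ = B := hBeq.symm
end
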